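/- Let n > 0 be a real number and define the Dawid–Skene objective L(x,w) = −n·(x·log((1+w)/2) + (1−x)·log((1−w)/2)). Then L satisfies Property P2 with g(w) = (1+w)/2: for all x ∈ [0,1] and all w1, w2 with 0 ≤ w1 < w2 < 1, if w1 > 2x − 1 then L(x,w1) < L(x,w2), and if w2 < 2x − 1 then L(x,w1) > L(x,w2). Equivalently, for every x ∈ [0,1] and w ∈ [0,1), the partial derivative of L with respect to w equals −n·(x/(1+w) − (1−x)/(1−w)), which is positive when w > 2x − 1 and negative when w < 2x − 1. -/

import Mathlib

lemma dsderiv (n x w : ℝ) (hw0 : 0 ≤ w) (hw1 : w < 1) :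
    HasDerivAt (fun w => -n * (x * Real.log ((1 + w)/2) + (1 - x) * Real.log ((1 - w)/2)))
      (-n * (x/(1 + w) - (1 - x)/(1 - w))) w := by
  have h1 : (1 + w)/2 ≠ 0 := by positivity
  have h2 : (1 - w)/2 ≠ 0 := by
    have : 0 < (1 - w)/2 := by linarith
    linarith
  have A : HasDerivAt (fun w : ℝ => (1 + w)/2) (1/2) w :=
    ((hasDerivAt_id w).const_add 1).div_const 2
  have B : HasDerivAt (fun w : ℝ => (1 - w)/2) ((-1)/2) w :=
    ((hasDerivAt_id w).const_sub 1).div_const 2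
  have hA := (A.log h1).const_mul x
  have hB := (B.log h2).const_mul (1 - x)
  have h := ((hA.add hB).const_mul (-n))
  refine h.congr_deriv ?_
  have hw1' : 1 - w ≠ 0 := by linarith
  have hw0' : 1 + w ≠ 0 := by linarith
  field_simp
  ring

lemma dssign (n x w : ℝ) (hn : 0 < n) (hx0 : 0 ≤ x) (hx1 : x ≤ 1) (hw0 : 0 ≤ w) (hw1 : w < 1) :
    (2*x - 1 < w → 0 < -n * (x/(1 + w) - (1 - x)/(1 - w))) ∧
    (w < 2*x - 1 → -n * (x/(1 + w) - (1 - x)/(1 - w)) < 0) := by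
  have hw0' : 0 < 1 + w := by linarith
  have hw1' : 0 < 1 - w := by linarith
  have key : -n * (x/(1 + w) - (1 - x)/(1 - w)) = n * (1 + w - 2*x) / ((1 + w) * (1 - w)) := by
    field_simp
    ring
  rw [key]
  constructor
  · intro h
    apply div_pos _ (by positivity)
    have : 0 < 1 + w - 2*x := by linarith
    positivity
  · intro h
    apply div_neg_of_neg_of_pos _ (by positivity)
    have : 1 + w - 2*x < 0 := by linarith
    nlinarith

theorem stmt_8 (n : ℝ) (hn : 0 < n) (L : ℝ × ℝ → ℝ)
    (hL : ∀ x w : ℝ,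
      L (x, w) = -n * (x * Real.log ((1 + w)/2) + (1 - x) * Real.log ((1 - w)/2))) :
    (∀ x ∈ Set.Icc (0 : ℝ) 1, ∀ w1 w2 : ℝ, 0 ≤ w1 → w1 < w2 → w2 < 1 →
      (2*x - 1 < w1 → L (x, w1) < L (x, w2)) ∧
      (w2 < 2*x - 1 → L (x, w1) > L (x, w2))) ∧
    (∀ x ∈ Set.Icc (0 : ℝ) 1, ∀ w ∈ Set.Ico (0 : ℝ) 1,
      HasDerivAt (fun w => L (x, w)) (-n * (x/(1 + w) - (1 - x)/(1 - w))) w ∧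
      (2*x - 1 < w → 0 < -n * (x/(1 + w) - (1 - x)/(1 - w))) ∧
      (w < 2*x - 1 → -n * (x/(1 + w) - (1 - x)/(1 - w)) < 0)) := by
  have hfun : ∀ x : ℝ, (fun w => L (x, w)) =
      fun w => -n * (x * Real.log ((1 + w)/2) + (1 - x) * Real.log ((1 - w)/2)) := by
    intro x; funext w; exact hL x w
  constructor
  · rintro x ⟨hx0, hx1⟩ w1 w2 hw10 h12 hw21
    set f := fun w => L (x, w) with hf
    have hd : ∀ w ∈ Set.Icc w1 w2, HasDerivAt f (-n * (x/(1 + w) - (1 - x)/(1 - w))) w := by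
      rintro w ⟨ha, hb⟩
      rw [hf, hfun x]
      exact dsderiv n x w (le_trans hw10 ha) (lt_of_le_of_lt hb hw21)
    have hcont : ContinuousOn f (Set.Icc w1 w2) := fun w hw =>
      ((hd w hw).continuousAt).continuousWithinAt
    have hderiv : ∀ w ∈ Set.Ioo w1 w2, deriv f w = -n * (x/(1 + w) - (1 - x)/(1 - w)) := by
      rintro w ⟨ha, hb⟩
      exact (hd w ⟨le_of_lt ha, le_of_lt hb⟩).deriv
    constructor
    · intro hx
      have mono : StrictMonoOn f (Set.Icc w1 w2) := by
        apply strictMonoOn_of_deriv_pos (convex_Icc w1 w2) hcont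
        rintro w hw
        rw [interior_Icc] at hw
        rw [hderiv w hw]
        exact (dssign n x w hn hx0 hx1 (le_trans hw10 hw.1.le)
          (lt_trans hw.2 hw21)).1 (lt_trans hx hw.1)
      exact mono (Set.left_mem_Icc.mpr h12.le) (Set.right_mem_Icc.mpr h12.le) h12
    · intro hx
      have anti : StrictAntiOn f (Set.Icc w1 w2) := by
        apply strictAntiOn_of_deriv_neg (convex_Icc w1 w2) hcont
        rintro w hw
        rw [interior_Icc] at hw
        rw [hderiv w hw]
        exact (dssign n x w hn hx0 hx1 (le_trans hw10 hw.1.le)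
          (lt_trans hw.2 hw21)).2 (lt_trans hw.2 hx)
      exact anti (Set.left_mem_Icc.mpr h12.le) (Set.right_mem_Icc.mpr h12.le) h12
  · rintro x ⟨hx0, hx1⟩ w ⟨hw0, hw1⟩
    refine ⟨?_, dssign n x w hn hx0 hx1 hw0 hw1⟩
    rw [hfun x]
    exact dsderiv n x w hw0 hw1
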